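/- Let f ∈ F with f ≠ 0 be given by an admissible linear system 𝒜 = (u, A, v) of dimension n with left family s_f = A⁻¹ v. Then the (n+1) × (n+1) block matrix A' = [[Σ_n v, −Σ_n A Σ_n], [0, u Σ_n]] is invertible over F, the solution vector of A' s = e_{n+1} is s = [f⁻¹; Σ_n s_f f⁻¹], and consequently 𝒜⁻¹ = (e₁, A', e_{n+1}) (the standard inverse of 𝒜) is an admissible linear system of dimension n+1 for f⁻¹. -/

import Mathlib

open Matrix

/-- The row vector `e₁ = (1,0,…,0)`. -/
def e1Row (F : Type*) [Semiring F] (n : ℕ) [NeZero n] : Matrix (Fin 1) (Fin n) F :=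
  Matrix.of fun _ j => if j = 0 then 1 else 0

/-- The permutation matrix `Σ_n` reversing the order of rows/columns. -/
def revMat (F : Type*) [Semiring F] (n : ℕ) : Matrix (Fin n) (Fin n) F :=
  Matrix.of fun p q => if q = p.rev then 1 else 0

lemma rev_mul_rev (F : Type*) [Semiring F] (n : ℕ) : revMat F n * revMat F n = 1 := by
  ext p r
  simp only [revMat, Matrix.mul_apply, Matrix.of_apply, ite_mul, one_mul, zero_mul,
    Matrix.one_apply]
  rw [Finset.sum_ite_eq' Finset.univ p.rev (fun x => if r = x.rev then (1:F) else 0)]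
  simp [Fin.rev_rev, eq_comm]

lemma fromRows_congr {R : Type*} {n₁ n₂ m : Type*}
    {A₁ B₁ : Matrix n₁ m R} {A₂ B₂ : Matrix n₂ m R}
    (h1 : A₁ = B₁) (h2 : A₂ = B₂) : fromRows A₁ A₂ = fromRows B₁ B₂ := by rw [h1, h2]

lemma fromBlocks_congr {R : Type*} {n₁ n₂ m₁ m₂ : Type*}
    {A₁ B₁ : Matrix n₁ m₁ R} {A₂ B₂ : Matrix n₁ m₂ R}
    {A₃ B₃ : Matrix n₂ m₁ R} {A₄ B₄ : Matrix n₂ m₂ R}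
    (h1 : A₁ = B₁) (h2 : A₂ = B₂) (h3 : A₃ = B₃) (h4 : A₄ = B₄) :
    fromBlocks A₁ A₂ A₃ A₄ = fromBlocks B₁ B₂ B₃ B₄ := by rw [h1, h2, h3, h4]

/-- The standard inverse: if `f ≠ 0` is given by an ALS `(e₁, A, v)` of dimension `n`
with left family `s_f`, then `A' = [[Σ v, −Σ A Σ], [0, e₁ Σ]]` is invertible over `F`,
the solution of `A' s = e_{n+1}` is `s = [f⁻¹; Σ s_f f⁻¹]`, and `(e₁, A', e_{n+1})` is
an admissible linear system of dimension `n+1` for `f⁻¹`. -/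
theorem standard_inverse {K F : Type*} [Field K] [DivisionRing F] [Algebra K F]
    {n : ℕ} [NeZero n]
    (f : F) (hne : f ≠ 0)
    (A B : Matrix (Fin n) (Fin n) F) (v : Matrix (Fin n) (Fin 1) K)
    (hAB : A * B = 1) (hBA : B * A = 1)
    (hf : f = (e1Row F n * B * v.map (algebraMap K F)) 0 0) :
    let A' : Matrix (Fin n ⊕ Fin 1) (Fin 1 ⊕ Fin n) F :=
      fromBlocks (revMat F n * v.map (algebraMap K F)) (-(revMat F n * A * revMat F n))
        0 (e1Row F n * revMat F n)
    let v' : Matrix (Fin n ⊕ Fin 1) (Fin 1) F :=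
      fromRows 0 (1 : Matrix (Fin 1) (Fin 1) F)
    let s : Matrix (Fin 1 ⊕ Fin n) (Fin 1) F :=
      fromRows (Matrix.of fun _ _ => f⁻¹)
        (Matrix.of fun p (_ : Fin 1) => (revMat F n * (B * v.map (algebraMap K F))) p 0 * f⁻¹)
    (A' * s = v') ∧ ∃ B' : Matrix (Fin 1 ⊕ Fin n) (Fin n ⊕ Fin 1) F,
      A' * B' = 1 ∧ B' * A' = 1 ∧ (B' * v') (Sum.inl 0) 0 = f⁻¹ := by
  intro A' v' s
  set Sg : Matrix (Fin n) (Fin n) F := revMat F n with hSgdef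
  set e : Matrix (Fin 1) (Fin n) F := e1Row F n with hedef
  set vF : Matrix (Fin n) (Fin 1) F := v.map (algebraMap K F) with hvFdef
  set Fm : Matrix (Fin 1) (Fin 1) F := Matrix.of fun _ _ => f with hFmdef
  set Fi : Matrix (Fin 1) (Fin 1) F := Matrix.of fun _ _ => f⁻¹ with hFidef
  have hSS : Sg * Sg = 1 := rev_mul_rev F n
  have hSS' : ∀ {m : Type} (X : Matrix (Fin n) m F), Sg * (Sg * X) = X := by
    intro m X; rw [← Matrix.mul_assoc, hSS, Matrix.one_mul]
  have hAB' : ∀ {m : Type} (X : Matrix (Fin n) m F), A * (B * X) = X := by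
    intro m X; rw [← Matrix.mul_assoc, hAB, Matrix.one_mul]
  have hBA' : ∀ {m : Type} (X : Matrix (Fin n) m F), B * (A * X) = X := by
    intro m X; rw [← Matrix.mul_assoc, hBA, Matrix.one_mul]
  have h2 : e * (B * vF) = Fm := by
    ext i j
    fin_cases i; fin_cases j
    rw [← Matrix.mul_assoc]
    exact hf.symm
  have h2' : ∀ {m : Type} (X : Matrix (Fin 1) m F), e * (B * (vF * X)) = Fm * X := by
    intro m X
    rw [← Matrix.mul_assoc B, ← Matrix.mul_assoc e, ← Matrix.mul_assoc e, Matrix.mul_assoc e B,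
      h2]
  have hFmFi : Fm * Fi = 1 := by
    ext i j
    fin_cases i; fin_cases j
    simp [hFmdef, hFidef, Matrix.mul_apply, Matrix.one_apply, mul_inv_cancel₀ hne]
  have hFiFm : Fi * Fm = 1 := by
    ext i j
    fin_cases i; fin_cases j
    simp [hFmdef, hFidef, Matrix.mul_apply, Matrix.one_apply, inv_mul_cancel₀ hne]
  have hFmFi' : ∀ {m : Type} (X : Matrix (Fin 1) m F), Fm * (Fi * X) = X := by
    intro m X; rw [← Matrix.mul_assoc, hFmFi, Matrix.one_mul]
  have hFiFm' : ∀ {m : Type} (X : Matrix (Fin 1) m F), Fi * (Fm * X) = X := by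
    intro m X; rw [← Matrix.mul_assoc, hFiFm, Matrix.one_mul]
  have hA' : A' = fromBlocks (Sg * vF) (-(Sg * A * Sg)) 0 (e * Sg) := by
    simp only [A', hSgdef, hedef, hvFdef]
  have hv' : v' = fromRows 0 (1 : Matrix (Fin 1) (Fin 1) F) := rfl
  have hs : s = fromRows Fi (Sg * (B * vF) * Fi) := by
    ext i j
    fin_cases j
    cases i with
    | inl i =>
      simp only [s, Matrix.fromRows_apply_inl, Matrix.of_apply, Sum.elim_inl, hFidef]
    | inr i =>
      simp only [s, Matrix.fromRows_apply_inr, Matrix.of_apply, Sum.elim_inr, hSgdef, hvFdef, hFidef]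
      conv_rhs => rw [Matrix.mul_apply, Fin.sum_univ_one]
      simp
  have claim1 : A' * s = v' := by
    rw [hA', hs, hv', Matrix.fromBlocks_mul_fromRows]
    refine fromRows_congr ?_ ?_
    · simp only [Matrix.mul_assoc, Matrix.neg_mul, hSS', hAB']
      abel
    · simp only [Matrix.mul_assoc, Matrix.zero_mul, hSS', h2', hFmFi, zero_add]
  refine ⟨claim1, ?_⟩
  refine ⟨fromBlocks (Fi * (e * (B * Sg))) Fi
      (Sg * (B * (vF * (Fi * (e * (B * Sg))))) - Sg * (B * Sg)) (Sg * (B * (vF * Fi))),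
      ?_, ?_, ?_⟩
  · rw [hA', Matrix.fromBlocks_multiply, ← Matrix.fromBlocks_one]
    refine fromBlocks_congr ?_ ?_ ?_ ?_
    · simp only [Matrix.mul_assoc, Matrix.neg_mul, Matrix.mul_sub, Matrix.mul_neg,
        hSS', hAB', hSS]
      abel
    · simp only [Matrix.mul_assoc, Matrix.neg_mul, hSS', hAB']
      abel
    · simp only [Matrix.mul_assoc, Matrix.zero_mul, Matrix.mul_sub, hSS', h2', hFmFi', zero_add]
      abel
    · simp only [Matrix.mul_assoc, Matrix.zero_mul, hSS', h2', hFmFi, zero_add]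
  · rw [hA', Matrix.fromBlocks_multiply, ← Matrix.fromBlocks_one]
    refine fromBlocks_congr ?_ ?_ ?_ ?_
    · simp only [Matrix.mul_assoc, Matrix.mul_zero, hSS', h2, hFiFm, Matrix.mul_one, add_zero]
    · simp only [Matrix.mul_assoc, Matrix.mul_neg, hSS', hBA', h2']
      abel
    · simp only [Matrix.mul_assoc, Matrix.mul_zero, Matrix.sub_mul, hSS', h2, hFiFm,
        Matrix.mul_one, hFiFm', add_zero]
      abel
    · simp only [Matrix.mul_assoc, Matrix.mul_neg, Matrix.sub_mul, Matrix.neg_mul, hSS',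
        hBA', hSS, hFiFm', h2', Matrix.mul_one]
      abel
  · rw [hv', Matrix.fromBlocks_mul_fromRows]
    simp [Matrix.fromRows_apply_inl, hFidef]
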